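/- Let n, m ≥ 1, let U ⊆ ℝ^d be open, and let f_1, …, f_n : U → ℝ be nonnegative functions. Let a_{ℓk} ≥ 0 (1 ≤ ℓ ≤ m, 1 ≤ k ≤ n) be constants with Σ_{ℓ=1}^m a_{ℓk} = 1 for each k, and define the mass redistribution g_ℓ = (Σ_{k=1}^n a_{ℓk} f_k²)^{1/2}. Then: (1) Σ_{ℓ=1}^m g_ℓ² = Σ_{k=1}^n f_k² on U; (2) if each f_k is differentiable at a point x ∈ U and g_ℓ(x) > 0 for every ℓ, then each g_ℓ is differentiable at x and Σ_{ℓ=1}^m ‖∇g_ℓ(x)‖² ≤ Σ_{k=1}^n ‖∇f_k(x)‖², with equality if and only if f_j(x)∇f_k(x) − f_k(x)∇f_j(x) = 0 for every pair j ≠ k such that a_{ℓj}a_{ℓk} ≠ 0 for at least one ℓ. -/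

import Mathlib

open Finset

local notation "⟪" x ", " y "⟫" => @inner ℝ _ _ x y

section Aux

variable {E : Type*} [NormedAddCommGroup E] [InnerProductSpace ℝ E]

private lemma antisym_sum_zero {n : ℕ} (P : Fin n → Fin n → ℝ)
    (h : ∀ j k, P j k + P k j = 0) : ∑ j, ∑ k, P j k = 0 := by
  have h1 : ∑ j : Fin n, ∑ k : Fin n, P j k = ∑ j : Fin n, ∑ k : Fin n, -P k j := by
    refine Finset.sum_congr rfl fun j _ => Finset.sum_congr rfl fun k _ => by linarith [h j k]
  have h2 : ∑ j : Fin n, ∑ k : Fin n, P k j = ∑ k : Fin n, ∑ j : Fin n, P k j :=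
    Finset.sum_comm
  simp only [Finset.sum_neg_distrib] at h1
  linarith [h1, h2]

private lemma smul_sub_norm_sq (s t : ℝ) (u v : E) :
    ‖s • u - t • v‖ ^ 2 = s ^ 2 * ‖u‖ ^ 2 - 2 * (s * t) * ⟪u, v⟫ + t ^ 2 * ‖v‖ ^ 2 := by
  rw [norm_sub_sq_real, norm_smul, norm_smul, real_inner_smul_left, real_inner_smul_right]
  simp only [mul_pow, Real.norm_eq_abs, sq_abs]
  ring

private lemma lagrange {n : ℕ} (a c : Fin n → ℝ) (F : Fin n → E) :
    (∑ j, a j * c j ^ 2) * (∑ k, a k * ‖F k‖ ^ 2) - ‖∑ k, (a k * c k) • F k‖ ^ 2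
      = (1 / 2) * ∑ j, ∑ k, (a j * a k) * ‖c j • F k - c k • F j‖ ^ 2 := by
  have hW : ‖∑ k, (a k * c k) • F k‖ ^ 2
      = ∑ j, ∑ k, (a j * c j) * ((a k * c k) * ⟪F j, F k⟫) := by
    rw [← real_inner_self_eq_norm_sq, sum_inner]
    refine Finset.sum_congr rfl fun j _ => ?_
    rw [real_inner_smul_left, inner_sum, Finset.mul_sum]
    refine Finset.sum_congr rfl fun k _ => ?_
    rw [real_inner_smul_right]
  have e1 : (∑ j, a j * c j ^ 2) * (∑ k, a k * ‖F k‖ ^ 2)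
      = ∑ j, ∑ k, (a j * c j ^ 2) * (a k * ‖F k‖ ^ 2) := Finset.sum_mul_sum _ _ _ _
  have key : ∑ j, ∑ k, ((a j * c j ^ 2) * (a k * ‖F k‖ ^ 2)
      - (a j * c j) * ((a k * c k) * ⟪F j, F k⟫)
      - (1 / 2) * ((a j * a k) * ‖c j • F k - c k • F j‖ ^ 2)) = 0 := by
    apply antisym_sum_zero
    intro j k
    rw [smul_sub_norm_sq, smul_sub_norm_sq, real_inner_comm (F k) (F j)]
    ring
  simp only [Finset.sum_sub_distrib] at key
  rw [e1, hW, Finset.mul_sum]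
  simp_rw [Finset.mul_sum]
  linarith [key]

private lemma hasGradientAt_sqrt_sum [CompleteSpace E] {n : ℕ} (a : Fin n → ℝ) (f : Fin n → E → ℝ)
    (F : Fin n → E) (x : E) (hk : ∀ k, HasGradientAt (f k) (F k) x)
    (hpos : 0 < ∑ k, a k * f k x ^ 2) :
    HasGradientAt (fun y => Real.sqrt (∑ k, a k * f k y ^ 2))
      ((Real.sqrt (∑ k, a k * f k x ^ 2))⁻¹ • ∑ k, (a k * f k x) • F k) x := by
  set td := InnerProductSpace.toDual ℝ E with htd
  have hfd : ∀ k, HasFDerivAt (f k) (td (F k)) x := fun k => (hk k)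
  have hH : HasFDerivAt (fun y => ∑ k, a k * f k y ^ 2)
      (∑ k, (a k * (2 * f k x)) • td (F k)) x := by
    refine HasFDerivAt.fun_sum fun k _ => ?_
    have h3 : HasFDerivAt (fun y => a k * (f k y * f k y))
        (a k • (f k x • td (F k) + f k x • td (F k))) x :=
      ((hfd k).mul (hfd k)).const_mul (a k)
    have he : (fun y => a k * f k y ^ 2) = fun y => a k * (f k y * f k y) := by
      funext y; ring
    rw [he]
    exact h3.congr_fderiv (by module)
  have hx0 : (∑ k, a k * f k x ^ 2) ≠ 0 := hpos.ne'
  have hs : Real.sqrt (∑ k, a k * f k x ^ 2) ≠ 0 := (Real.sqrt_pos.mpr hpos).ne'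
  have hsq := hH.sqrt hx0
  rw [hasGradientAt_iff_hasFDerivAt]
  refine hsq.congr_fderiv ?_
  symm
  rw [map_smul, map_sum]
  simp only [map_smul]
  rw [Finset.smul_sum, Finset.smul_sum]
  refine Finset.sum_congr rfl fun k _ => ?_
  rw [smul_smul, smul_smul]
  congr 1
  field_simp

end Aux

/-- Mass redistribution reduces the kinetic energy density.
Given nonnegative `f₁, …, fₙ` on an open `U ⊆ ℝ^d`, nonnegative constants `a_{ℓk}` with
`Σ_ℓ a_{ℓk} = 1` for each `k`, and `g_ℓ = (Σ_k a_{ℓk} fₖ²)^{1/2}`, we have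
(1) `Σ_ℓ g_ℓ² = Σ_k fₖ²` on `U`; and
(2) if each `fₖ` is differentiable at `x ∈ U` and `g_ℓ(x) > 0` for every `ℓ`, then each `g_ℓ`
is differentiable at `x` and `Σ_ℓ ‖∇g_ℓ(x)‖² ≤ Σ_k ‖∇fₖ(x)‖²`, with equality iff
`fⱼ(x)∇fₖ(x) − fₖ(x)∇fⱼ(x) = 0` for every `j ≠ k` with `a_{ℓj}a_{ℓk} ≠ 0` for some `ℓ`. -/
theorem mass_redistribution_kinetic_energy {d n m : ℕ} (hn : 1 ≤ n) (hm : 1 ≤ m)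
    (U : Set (EuclideanSpace ℝ (Fin d))) (hU : IsOpen U)
    (f : Fin n → EuclideanSpace ℝ (Fin d) → ℝ)
    (hf0 : ∀ k, ∀ x ∈ U, 0 ≤ f k x)
    (a : Fin m → Fin n → ℝ)
    (ha0 : ∀ ℓ k, 0 ≤ a ℓ k)
    (hasum : ∀ k, ∑ ℓ, a ℓ k = 1)
    (g : Fin m → EuclideanSpace ℝ (Fin d) → ℝ)
    (hg : ∀ ℓ, g ℓ = fun y => Real.sqrt (∑ k, a ℓ k * (f k y) ^ 2)) :
    (∀ x ∈ U, ∑ ℓ, (g ℓ x) ^ 2 = ∑ k, (f k x) ^ 2) ∧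
    (∀ x ∈ U, (∀ k, DifferentiableAt ℝ (f k) x) → (∀ ℓ, 0 < g ℓ x) →
      (∀ ℓ, DifferentiableAt ℝ (g ℓ) x) ∧
      (∑ ℓ, ‖gradient (g ℓ) x‖ ^ 2 ≤ ∑ k, ‖gradient (f k) x‖ ^ 2) ∧
      (∑ ℓ, ‖gradient (g ℓ) x‖ ^ 2 = ∑ k, ‖gradient (f k) x‖ ^ 2 ↔
        ∀ j k, j ≠ k → (∃ ℓ, a ℓ j * a ℓ k ≠ 0) →
          f j x • gradient (f k) x - f k x • gradient (f j) x = 0)) := by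
  have hgsq : ∀ ℓ y, (g ℓ y) ^ 2 = ∑ k, a ℓ k * (f k y) ^ 2 := by
    intro ℓ y
    rw [hg ℓ]
    exact Real.sq_sqrt (Finset.sum_nonneg fun k _ => mul_nonneg (ha0 ℓ k) (sq_nonneg _))
  constructor
  · intro x hx
    simp_rw [hgsq]
    rw [Finset.sum_comm]
    simp_rw [← Finset.sum_mul, hasum, one_mul]
  · intro x hx hdiff hgpos
    have hkg : ∀ k, HasGradientAt (f k) (gradient (f k) x) x :=
      fun k => (hdiff k).hasGradientAt
    have hSpos : ∀ ℓ, 0 < ∑ k, a ℓ k * (f k x) ^ 2 := by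
      intro ℓ
      rw [← hgsq ℓ x]
      exact pow_pos (hgpos ℓ) 2
    have hGrad : ∀ ℓ, HasGradientAt (g ℓ)
        ((Real.sqrt (∑ k, a ℓ k * (f k x) ^ 2))⁻¹ •
          ∑ k, (a ℓ k * f k x) • gradient (f k) x) x := by
      intro ℓ
      rw [hg ℓ]
      exact hasGradientAt_sqrt_sum (a ℓ) f (fun k => gradient (f k) x) x hkg (hSpos ℓ)
    have hdg : ∀ ℓ, DifferentiableAt ℝ (g ℓ) x := fun ℓ => (hGrad ℓ).differentiableAt
    have hnormg : ∀ ℓ, ‖gradient (g ℓ) x‖ ^ 2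
        = ‖∑ k, (a ℓ k * f k x) • gradient (f k) x‖ ^ 2 / (∑ k, a ℓ k * (f k x) ^ 2) := by
      intro ℓ
      rw [(hGrad ℓ).gradient, norm_smul, mul_pow, Real.norm_eq_abs, sq_abs, inv_pow,
        Real.sq_sqrt (hSpos ℓ).le, div_eq_inv_mul]
    have hLag : ∀ ℓ, (∑ k, a ℓ k * (f k x) ^ 2) * (∑ k, a ℓ k * ‖gradient (f k) x‖ ^ 2)
        - ‖∑ k, (a ℓ k * f k x) • gradient (f k) x‖ ^ 2
        = (1 / 2) * ∑ j, ∑ k, (a ℓ j * a ℓ k) *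
            ‖f j x • gradient (f k) x - f k x • gradient (f j) x‖ ^ 2 :=
      fun ℓ => lagrange (a ℓ) (fun k => f k x) (fun k => gradient (f k) x)
    have hmain : ∑ k, ‖gradient (f k) x‖ ^ 2 - ∑ ℓ, ‖gradient (g ℓ) x‖ ^ 2
        = ∑ ℓ, (∑ j, ∑ k, (a ℓ j * a ℓ k) *
            ‖f j x • gradient (f k) x - f k x • gradient (f j) x‖ ^ 2)
            / (2 * (∑ k, a ℓ k * (f k x) ^ 2)) := by
      have hT : ∑ ℓ, ∑ k, a ℓ k * ‖gradient (f k) x‖ ^ 2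
          = ∑ k, ‖gradient (f k) x‖ ^ 2 := by
        rw [Finset.sum_comm]
        simp_rw [← Finset.sum_mul, hasum, one_mul]
      rw [← hT, ← Finset.sum_sub_distrib]
      refine Finset.sum_congr rfl fun ℓ _ => ?_
      rw [hnormg ℓ]
      have h1 := hLag ℓ
      have h2 := hSpos ℓ
      have h3 : ‖∑ k, (a ℓ k * f k x) • gradient (f k) x‖ ^ 2
          = (∑ k, a ℓ k * (f k x) ^ 2) * (∑ k, a ℓ k * ‖gradient (f k) x‖ ^ 2)
            - (1 / 2) * ∑ j, ∑ k, (a ℓ j * a ℓ k) *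
              ‖f j x • gradient (f k) x - f k x • gradient (f j) x‖ ^ 2 := by linarith
      rw [h3]
      field_simp
      ring
    have hDnn : ∀ ℓ, 0 ≤ ∑ j, ∑ k, (a ℓ j * a ℓ k) *
        ‖f j x • gradient (f k) x - f k x • gradient (f j) x‖ ^ 2 :=
      fun ℓ => Finset.sum_nonneg fun j _ => Finset.sum_nonneg fun k _ =>
        mul_nonneg (mul_nonneg (ha0 ℓ j) (ha0 ℓ k)) (sq_nonneg _)
    have htermnn : ∀ ℓ ∈ Finset.univ, (0 : ℝ) ≤ (∑ j, ∑ k, (a ℓ j * a ℓ k) *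
        ‖f j x • gradient (f k) x - f k x • gradient (f j) x‖ ^ 2)
        / (2 * (∑ k, a ℓ k * (f k x) ^ 2)) :=
      fun ℓ _ => div_nonneg (hDnn ℓ) (by linarith [hSpos ℓ])
    refine ⟨hdg, ?_, ?_⟩
    · linarith [hmain, Finset.sum_nonneg htermnn]
    · constructor
      · intro heq j k hjk hex
        obtain ⟨ℓ0, hℓ0⟩ := hex
        have hsum0 : ∑ ℓ, (∑ j, ∑ k, (a ℓ j * a ℓ k) *
            ‖f j x • gradient (f k) x - f k x • gradient (f j) x‖ ^ 2)
            / (2 * (∑ k, a ℓ k * (f k x) ^ 2)) = 0 := by linarith [hmain]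
        have hall := (Finset.sum_eq_zero_iff_of_nonneg htermnn).mp hsum0 ℓ0 (Finset.mem_univ _)
        have h2S : 2 * (∑ k, a ℓ0 k * (f k x) ^ 2) ≠ 0 := by
          have := hSpos ℓ0; positivity
        have hD0 : ∑ j, ∑ k, (a ℓ0 j * a ℓ0 k) *
            ‖f j x • gradient (f k) x - f k x • gradient (f j) x‖ ^ 2 = 0 := by
          rcases div_eq_zero_iff.mp hall with h | h
          · exact h
          · exact absurd h h2S
        have hterm : (a ℓ0 j * a ℓ0 k) *
            ‖f j x • gradient (f k) x - f k x • gradient (f j) x‖ ^ 2 = 0 := by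
          have hrow := (Finset.sum_eq_zero_iff_of_nonneg (fun j _ =>
            Finset.sum_nonneg fun k _ =>
              mul_nonneg (mul_nonneg (ha0 ℓ0 j) (ha0 ℓ0 k)) (sq_nonneg _))).mp hD0
            j (Finset.mem_univ _)
          exact (Finset.sum_eq_zero_iff_of_nonneg (fun k _ =>
            mul_nonneg (mul_nonneg (ha0 ℓ0 j) (ha0 ℓ0 k)) (sq_nonneg _))).mp hrow
            k (Finset.mem_univ _)
        have hnz : ‖f j x • gradient (f k) x - f k x • gradient (f j) x‖ ^ 2 = 0 := by
          rcases mul_eq_zero.mp hterm with h | h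
          · exact absurd h hℓ0
          · exact h
        exact norm_eq_zero.mp (sq_eq_zero_iff.mp hnz)
      · intro hcond
        have hsum0 : ∑ ℓ, (∑ j, ∑ k, (a ℓ j * a ℓ k) *
            ‖f j x • gradient (f k) x - f k x • gradient (f j) x‖ ^ 2)
            / (2 * (∑ k, a ℓ k * (f k x) ^ 2)) = 0 := by
          refine Finset.sum_eq_zero fun ℓ _ => ?_
          have hD0 : ∑ j, ∑ k, (a ℓ j * a ℓ k) *
              ‖f j x • gradient (f k) x - f k x • gradient (f j) x‖ ^ 2 = 0 := by
            refine Finset.sum_eq_zero fun j _ => Finset.sum_eq_zero fun k _ => ?_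
            by_cases hjk : j = k
            · subst hjk; simp
            · by_cases haa : a ℓ j * a ℓ k = 0
              · rw [haa, zero_mul]
              · rw [hcond j k hjk ⟨ℓ, haa⟩]
                simp
          rw [hD0, zero_div]
        linarith [hmain, hsum0]
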